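/- Let O = (c_0, c_1, …, c_{2p+1}) be a generic type C column sequence whose chain decomposition is the single chain [c_0 (c_1 c_2) … (c_{2p−1} c_{2p}) c_{2p+1}] with p ≥ 1, and set O'' = (c_2, c_3, …, c_{2p+1}). For P ∈ Norm(O''), let P^u be the sequence (c_0, c_1) followed by P, and let P^d be P^u with its first four entries replaced by their fundamental degeneration. Then every P^u and P^d lies in Norm(O), the sequences P^u, P^d over all P ∈ Norm(O'') are pairwise distinct, and Norm(O) = { P^u, P^d : P ∈ Norm(O'') }; consequently |Norm(O)| = 2 |Norm(O'')|, and by induction a generic single chain with p interior pairs satisfies |Norm(O)| = 2^p. -/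

import Mathlib

/-- A type C column sequence: weakly decreasing, even length, and each
consecutive pair `(c_{2i}, c_{2i+1})` has even sum. -/
def TypeC (c : List ℕ) : Prop :=
  Even c.length ∧ c.Chain' (· ≥ ·) ∧
    ∀ i, 2 * i + 1 < c.length → Even (c.getD (2 * i) 0 + c.getD (2 * i + 1) 0)

/-- A chain `[b_0, b_1, …, b_{2k+1}]`: nonempty, of even length, weakly
decreasing, with `b_{2i-1} = b_{2i}` for `1 ≤ i ≤ k`. -/
def IsChainSeq (b : List ℕ) : Prop :=
  b ≠ [] ∧ Even b.length ∧ b.Chain' (· ≥ ·) ∧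
    ∀ i, 2 * i + 2 < b.length → b.getD (2 * i + 1) 0 = b.getD (2 * i + 2) 0

/-- The chain decomposition of a column sequence: cut after each odd
position `2q+1` such that `c_{2q+1} > c_{2q+2}`. -/
def chains : List ℕ → List (List ℕ)
  | a :: b :: rest =>
    match chains rest with
    | [] => [[a, b]]
    | C :: L => if C.headI < b then [a, b] :: C :: L else (a :: b :: C) :: L
  | _ => []

/-- A chain is generic if it is `[b_0 = b_1]` (length 2 with equal entries)
or has length `≥ 4` and `b_{2i} > b_{2i+1}` for all `i`. -/
def GenericChain (b : List ℕ) : Prop :=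
  (b.length = 2 ∧ b.getD 0 0 = b.getD 1 0) ∨
  (4 ≤ b.length ∧ ∀ i, 2 * i + 1 < b.length → b.getD (2 * i + 1) 0 < b.getD (2 * i) 0)

/-- A column sequence is generic if all of its chains are generic. -/
def GenericSeq (c : List ℕ) : Prop := ∀ C ∈ chains c, GenericChain C

/-- The fundamental degeneration of a quadruple `b_0 ≥ b_1 = b_2 ≥ b_3`. -/
def fundDeg (b0 b1 b2 b3 : ℕ) : ℕ × ℕ × ℕ × ℕ :=
  if b0 = b1 then
    if b2 = b3 then (b0 + 1, b1 + 1, b2 - 1, b3 - 1)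
    else (b0 + 1, b1 + 1, b2 - 2, b3)
  else
    if b2 = b3 then (b0, b1 + 2, b2 - 1, b3 - 1)
    else (b0, b1 + 2, b2 - 2, b3)

/-- Replacement of the four consecutive entries at positions
`2i, 2i+1, 2i+2, 2i+3` by their fundamental degeneration, deleting the
last two entries if the two lowered entries both become `0`. -/
def degenAt (c : List ℕ) (i : ℕ) : List ℕ :=
  let q := fundDeg (c.getD (2 * i) 0) (c.getD (2 * i + 1) 0)
    (c.getD (2 * i + 2) 0) (c.getD (2 * i + 3) 0)
  let c' := c.take (2 * i) ++ [q.1, q.2.1, q.2.2.1, q.2.2.2] ++ c.drop (2 * i + 4)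
  if q.2.2.1 = 0 ∧ q.2.2.2 = 0 then c'.dropLast.dropLast else c'

/-- `Norm(O)`: the smallest collection containing `O` and closed under
fundamental degeneration at an interior pair of a chain (the positions
`(2i+1, 2i+2)` carry an interior pair of a chain exactly when the two
entries there are equal). -/
inductive NormMem (O : List ℕ) : List ℕ → Prop
  | base : NormMem O O
  | step (c : List ℕ) (i : ℕ) : NormMem O c → 2 * i + 3 < c.length →
      c.getD (2 * i + 1) 0 = c.getD (2 * i + 2) 0 → NormMem O (degenAt c i)

namespace CPf

/-- value at odd position `2*i-1` (the first copy of `v i`). -/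
def fA (v : ℕ → ℕ) (S : Finset ℕ) (i : ℕ) : ℕ :=
  if i ∈ S then (if i - 1 ∈ S ∧ v (i-1) = v i + 2 then v i + 1 else v i + 2) else v i

/-- value at even position `2*i` (the second copy of `v i`). -/
def fB (v : ℕ → ℕ) (S : Finset ℕ) (i : ℕ) : ℕ :=
  if i ∈ S then (if i + 1 ∈ S ∧ v i = v (i+1) + 2 then v i - 1 else v i - 2) else v i

def ff (v : ℕ → ℕ) (S : Finset ℕ) (k : ℕ) : ℕ :=
  if k % 2 = 0 then fB v S (k/2) else fA v S ((k+1)/2)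

def Sh (v : ℕ → ℕ) (p : ℕ) (S : Finset ℕ) : Prop := p ∈ S ∧ v p = 2 ∧ v (p+1) = 0

instance (v p S) : Decidable (Sh v p S) := by unfold Sh; infer_instance

def Lf (v : ℕ → ℕ) (p : ℕ) (S : Finset ℕ) : ℕ := if Sh v p S then 2*p else 2*p+2

def Phi (v : ℕ → ℕ) (p : ℕ) (S : Finset ℕ) : List ℕ := (List.range (Lf v p S)).map (ff v S)

lemma Phi_length (v p S) : (Phi v p S).length = Lf v p S := by simp [Phi]

lemma rangeMap_getD (n : ℕ) (f : ℕ → ℕ) (k : ℕ) (h : k < n) :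
    ((List.range n).map f).getD k 0 = f k := by
  rw [List.getD_eq_getElem _ _ (by simp [h])]; simp

lemma Phi_getD (v p S) (k : ℕ) (h : k < Lf v p S) : (Phi v p S).getD k 0 = ff v S k :=
  rangeMap_getD _ _ _ h

lemma eq_rangeMap (c : List ℕ) (n : ℕ) (f : ℕ → ℕ) (hlen : c.length = n)
    (h : ∀ k < n, c.getD k 0 = f k) : c = (List.range n).map f := by
  apply List.ext_getElem (by simpa using hlen)
  intro k h1 h2
  have := h k (by omega)
  rw [List.getD_eq_getElem _ _ h1] at this
  rw [this]; simp

lemma splice_length (c : List ℕ) (j : ℕ) (x1 x2 x3 x4 : ℕ) (h : 2*j+4 ≤ c.length) :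
    (c.take (2*j) ++ [x1,x2,x3,x4] ++ c.drop (2*j+4)).length = c.length := by
  simp; omega

lemma splice_getD (c : List ℕ) (j : ℕ) (x1 x2 x3 x4 : ℕ) (h : 2*j+4 ≤ c.length) (k : ℕ) :
    (c.take (2*j) ++ [x1,x2,x3,x4] ++ c.drop (2*j+4)).getD k 0 =
      if k < 2*j then c.getD k 0 else if k = 2*j then x1 else if k = 2*j+1 then x2
      else if k = 2*j+2 then x3 else if k = 2*j+3 then x4 else c.getD k 0 := by
  have htl : (c.take (2*j)).length = 2*j := by simp; omega
  rcases lt_or_ge k (2*j) with hk | hk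
  · rw [List.append_assoc, List.getD_append _ _ _ _ (by omega)]
    simp only [if_pos hk]
    rw [List.getD_eq_getElem _ _ (by omega), List.getD_eq_getElem _ _ (by omega)]
    simp [List.getElem_take]
  · rw [List.append_assoc, List.getD_append_right _ _ _ _ (by omega), htl]
    rcases lt_or_ge k (2*j+4) with hk2 | hk2
    · rw [List.getD_append _ _ _ _ (by simp; omega)]
      have h4 : k - 2*j = 0 ∨ k - 2*j = 1 ∨ k - 2*j = 2 ∨ k - 2*j = 3 := by omega
      rcases h4 with h4 | h4 | h4 | h4 <;> rw [h4] <;> split_ifs <;> first | rfl | omega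
    · rw [List.getD_append_right _ _ _ _ (by simp; omega)]
      simp only [List.length_cons, List.length_nil]
      rw [List.getD_eq_getElem?_getD, List.getElem?_drop, List.getD_eq_getElem?_getD]
      have : 2*j+4 + (k - 2*j - (0+1+1+1+1)) = k := by omega
      rw [this]
      split_ifs <;> first | rfl | omega


variable (v : ℕ → ℕ) (S : Finset ℕ) (j : ℕ)

lemma hb0 (hjS : j+1 ∉ S) : fB v S j = if j ∈ S then v j - 2 else v j := by
  simp [fB, hjS]
lemma hb1 (hjS : j+1 ∉ S) : fA v S (j+1) = v (j+1) := by simp [fA, hjS]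
lemma hb2 (hjS : j+1 ∉ S) : fB v S (j+1) = v (j+1) := by simp [fB, hjS]
lemma hb3 (hjS : j+1 ∉ S) : fA v S (j+2) = if j+2 ∈ S then v (j+2) + 2 else v (j+2) := by
  have h : j + 2 - 1 = j + 1 := rfl
  simp [fA, h, hjS]

lemma ht0 : fB v (insert (j+1) S) j
    = if j ∈ S then (if v j = v (j+1) + 2 then v j - 1 else v j - 2) else v j := by
  have hne : j ≠ j + 1 := by omega
  simp [fB, Finset.mem_insert, hne]
lemma ht1 : fA v (insert (j+1) S) (j+1)
    = if j ∈ S ∧ v j = v (j+1) + 2 then v (j+1) + 1 else v (j+1) + 2 := by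
  have hne : j ≠ j + 1 := by omega
  simp [fA, Finset.mem_insert, hne]
lemma ht2 : fB v (insert (j+1) S) (j+1)
    = if j+2 ∈ S ∧ v (j+1) = v (j+2) + 2 then v (j+1) - 1 else v (j+1) - 2 := by
  have hne : j + 2 ≠ j + 1 := by omega
  simp [fB, Finset.mem_insert, hne]
lemma ht3 : fA v (insert (j+1) S) (j+2)
    = if j+2 ∈ S then (if v (j+1) = v (j+2) + 2 then v (j+2) + 1 else v (j+2) + 2)
      else v (j+2) := by
  have hne : j + 2 ≠ j + 1 := by omega
  have h : j + 2 - 1 = j + 1 := rfl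
  simp [fA, Finset.mem_insert, hne, h]

lemma fund_correct (hjS : j+1 ∉ S)
    (h1 : v (j+1) + 2 ≤ v j) (h2 : v (j+2) + 2 ≤ v (j+1)) :
    fundDeg (fB v S j) (fA v S (j+1)) (fB v S (j+1)) (fA v S (j+2)) =
      (fB v (insert (j+1) S) j, fA v (insert (j+1) S) (j+1),
       fB v (insert (j+1) S) (j+1), fA v (insert (j+1) S) (j+2)) := by
  rw [hb0 v S j hjS, hb1 v S j hjS, hb2 v S j hjS, hb3 v S j hjS,
    ht0, ht1, ht2, ht3]
  unfold fundDeg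
  split_ifs <;> simp_all [Prod.mk.injEq] <;> omega

lemma ff_even (i : ℕ) : ff v S (2*i) = fB v S i := by
  have h1 : 2*i % 2 = 0 := by omega
  have h2 : 2*i/2 = i := by omega
  simp [ff, h1, h2]

lemma ff_odd (i : ℕ) : ff v S (2*i+1) = fA v S (i+1) := by
  have h1 : (2*i+1) % 2 = 1 := by omega
  have h2 : (2*i+1+1)/2 = i+1 := by omega
  simp [ff, h1, h2]

lemma ff_insert_away (k : ℕ) (h : k < 2*j ∨ 2*j+4 ≤ k) :
    ff v (insert (j+1) S) k = ff v S k := by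
  rcases Nat.even_or_odd k with ⟨i, hi⟩ | ⟨i, hi⟩
  · subst hi
    rw [show i + i = 2*i by omega, ff_even, ff_even]
    have e1 : ¬ i = j + 1 := by omega
    have e2 : ¬ i + 1 = j + 1 := by omega
    simp [fB, Finset.mem_insert, e1, e2, show ¬ i = j by omega]
  · subst hi
    rw [show 2*i+1 = 2*i+1 by rfl, ff_odd, ff_odd]
    have e1 : ¬ i + 1 = j + 1 := by omega
    have e2 : ¬ i = j + 1 := by omega
    simp [fA, Finset.mem_insert, e1, e2, show ¬ i = j by omega]

lemma getD_take (l : List ℕ) (m k : ℕ) (h : k < m) (h2 : k < l.length) :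
    (l.take m).getD k 0 = l.getD k 0 := by
  rw [List.getD_eq_getElem _ _ (by simp; omega), List.getD_eq_getElem _ _ h2]
  simp [List.getElem_take]

theorem step_eq (p : ℕ) (hv : ∀ i ≤ p, v (i+1) + 2 ≤ v i)
    (hS : S ⊆ Finset.Icc 1 p) (hj : j < p) (hjS : j+1 ∉ S) :
    2*j+3 < (Phi v p S).length ∧
    (Phi v p S).getD (2*j+1) 0 = (Phi v p S).getD (2*j+2) 0 ∧
    degenAt (Phi v p S) j = Phi v p (insert (j+1) S) := by
  have hpS : p + 1 ∉ S := by intro h; have := Finset.mem_Icc.1 (hS h); omega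
  have h1 : v (j+1) + 2 ≤ v j := hv j (by omega)
  have h2 : v (j+2) + 2 ≤ v (j+1) := hv (j+1) (by omega)
  have hlen4 : 2*j+4 ≤ Lf v p S := by
    unfold Lf; split_ifs with h
    · have : j + 1 ≠ p := fun e => hjS (e ▸ h.1)
      omega
    · omega
  have hL : (Phi v p S).length = Lf v p S := Phi_length v p S
  have hg0 : (Phi v p S).getD (2*j) 0 = fB v S j := by
    rw [Phi_getD _ _ _ _ (by omega), ff_even]
  have hg1 : (Phi v p S).getD (2*j+1) 0 = fA v S (j+1) := by
    rw [Phi_getD _ _ _ _ (by omega), ff_odd]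
  have hg2 : (Phi v p S).getD (2*j+2) 0 = fB v S (j+1) := by
    rw [show 2*j+2 = 2*(j+1) by omega, Phi_getD _ _ _ _ (by omega), ff_even]
  have hg3 : (Phi v p S).getD (2*j+3) 0 = fA v S (j+2) := by
    rw [show 2*j+3 = 2*(j+1)+1 by omega, Phi_getD _ _ _ _ (by omega), ff_odd]
  refine ⟨by omega, by rw [hg1, hg2, hb1 v S j hjS, hb2 v S j hjS], ?_⟩
  unfold degenAt
  rw [hg0, hg1, hg2, hg3, fund_correct v S j hjS h1 h2]
  set S' := insert (j+1) S with hS'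
  have hmem : ∀ i : ℕ, i ∈ S' ↔ i = j + 1 ∨ i ∈ S := fun i => Finset.mem_insert
  -- drop-condition analysis
  have hvp : ∀ i ≤ p, 2 ≤ v i := fun i hi => by have := hv i hi; omega
  have hdrop : (fB v S' (j+1) = 0 ∧ fA v S' (j+2) = 0) ↔
      (j+1 = p ∧ v p = 2 ∧ v (p+1) = 0) := by
    rw [ht2, ht3]
    constructor
    · rintro ⟨hq3, hq4⟩
      have hj2 : j + 2 ∉ S := by
        intro hmem2
        by_cases hc : v (j+1) = v (j+2) + 2 <;> simp [hmem2, hc] at hq4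
      simp [hj2] at hq3 hq4
      have hj1p : j + 1 = p := by
        by_contra hne
        have : j + 2 ≤ p := by omega
        have := hvp (j+2) this
        omega
      refine ⟨hj1p, by rw [← hj1p]; omega, by rw [← hj1p]; simpa using hq4⟩
    · rintro ⟨hjp, hv2, hv0⟩
      have hj2 : j + 2 ∉ S := by rw [show j + 2 = p + 1 by omega]; exact hpS
      simp [hj2]
      constructor
      · rw [show j + 1 = p by omega]; omega
      · rw [show j + 2 = p + 1 by omega]; omega
  by_cases hD : j+1 = p ∧ v p = 2 ∧ v (p+1) = 0
  · -- drop case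
    have hShS : ¬ Sh v p S := fun h => hjS (hD.1 ▸ h.1)
    have hLfS : Lf v p S = 2*p+2 := by simp [Lf, hShS]
    have hShS' : Sh v p S' := ⟨(hmem p).2 (Or.inl hD.1.symm), hD.2.1, hD.2.2⟩
    have hLfS' : Lf v p S' = 2*p := by simp [Lf, hShS']
    rw [if_pos (hdrop.2 hD)]
    have hlen' : 2*j+4 ≤ (Phi v p S).length := by omega
    have hcl : ((Phi v p S).take (2*j) ++
        [fB v S' j, fA v S' (j+1), fB v S' (j+1), fA v S' (j+2)] ++
        (Phi v p S).drop (2*j+4)).length = 2*p+2 := by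
      rw [splice_length _ _ _ _ _ _ hlen']; omega
    have hdl : ∀ l : List ℕ, l.dropLast.dropLast = l.take (l.length - 2) := by
      intro l
      rw [List.dropLast_eq_take, List.dropLast_eq_take, List.length_take, List.take_take]
      congr 1; omega
    rw [hdl, hcl, show 2*p+2-2 = 2*p by omega]
    rw [show Phi v p S' = (List.range (2*p)).map (ff v S') by unfold Phi; rw [hLfS']]
    apply eq_rangeMap
    · rw [List.length_take, splice_length _ _ _ _ _ _ hlen']; omega
    · intro k hk
      have hj1 : j + 1 = p := hD.1
      rw [getD_take _ _ _ (by omega) (by rw [splice_length _ _ _ _ _ _ hlen']; omega)]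
      rw [splice_getD _ _ _ _ _ _ hlen']
      rcases (by omega : k < 2*j ∨ k = 2*j ∨ k = 2*j+1) with hr | hr | hr
      · rw [if_pos hr, Phi_getD _ _ _ _ (by omega), ff_insert_away _ _ _ _ (by omega)]
      · subst hr
        rw [if_neg (by omega), if_pos rfl, ff_even]
      · subst hr
        rw [if_neg (by omega), if_neg (by omega), if_pos rfl, ff_odd]
  · -- no-drop case
    rw [if_neg (fun h => hD (hdrop.1 h))]
    have hLfeq : Lf v p S' = Lf v p S := by
      have : Sh v p S' ↔ Sh v p S := by
        constructor
        · rintro ⟨hp', hh2, hh3⟩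
          rcases (hmem p).1 hp' with he | he
          · exact absurd ⟨he.symm, hh2, hh3⟩ hD
          · exact ⟨he, hh2, hh3⟩
        · rintro ⟨hp', hh2, hh3⟩
          exact ⟨(hmem p).2 (Or.inr hp'), hh2, hh3⟩
      simp [Lf, this]
    rw [show Phi v p S' = (List.range (Lf v p S)).map (ff v S') by unfold Phi; rw [hLfeq]]
    apply eq_rangeMap
    · rw [splice_length _ _ _ _ _ _ (by omega)]; omega
    · intro k hk
      rw [splice_getD _ _ _ _ _ _ (by omega)]
      rcases (by omega : k < 2*j ∨ k = 2*j ∨ k = 2*j+1 ∨ k = 2*j+2 ∨ k = 2*j+3 ∨ 2*j+4 ≤ k)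
        with hr | hr | hr | hr | hr | hr
      · rw [if_pos hr, Phi_getD _ _ _ _ (by omega), ff_insert_away _ _ _ _ (by omega)]
      · subst hr; rw [if_neg (by omega), if_pos rfl, ff_even]
      · subst hr
        rw [if_neg (by omega), if_neg (by omega), if_pos rfl, ff_odd]
      · subst hr
        rw [if_neg (by omega), if_neg (by omega), if_neg (by omega), if_pos rfl,
          show 2*j+2 = 2*(j+1) by omega, ff_even]
      · subst hr
        rw [if_neg (by omega), if_neg (by omega), if_neg (by omega), if_neg (by omega),
          if_pos rfl, show 2*j+3 = 2*(j+1)+1 by omega, ff_odd]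
      · rw [if_neg (by omega), if_neg (by omega), if_neg (by omega), if_neg (by omega),
          if_neg (by omega), Phi_getD _ _ _ _ (by omega),
          ff_insert_away _ _ _ _ (by omega)]

theorem step_inv (p : ℕ) (hv : ∀ i ≤ p, v (i+1) + 2 ≤ v i) (hS : S ⊆ Finset.Icc 1 p)
    (hlen : 2*j+3 < (Phi v p S).length)
    (heq : (Phi v p S).getD (2*j+1) 0 = (Phi v p S).getD (2*j+2) 0) :
    j < p ∧ j+1 ∉ S := by
  have hL := Phi_length v p S
  have hjp : j < p := by unfold Lf at hL; split_ifs at hL <;> omega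
  refine ⟨hjp, fun hmem => ?_⟩
  rw [Phi_getD _ _ _ _ (by omega), show 2*j+2 = 2*(j+1) by omega,
    Phi_getD _ _ _ _ (by omega), ff_odd, ff_even] at heq
  have hvp : 2 ≤ v (j+1) := by have := hv (j+1) (by omega); omega
  rw [fA, fB, if_pos hmem, if_pos hmem] at heq
  split_ifs at heq <;> omega

theorem Phi_inj (p : ℕ) {S' : Finset ℕ} (hv : ∀ i ≤ p, v (i+1) + 2 ≤ v i)
    (hS : S ⊆ Finset.Icc 1 p) (hS' : S' ⊆ Finset.Icc 1 p)
    (hSS : Phi v p S = Phi v p S') : S = S' := by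
  ext i
  by_cases hi : 1 ≤ i ∧ i ≤ p
  · obtain ⟨j, rfl⟩ : ∃ j, i = j+1 := ⟨i-1, by omega⟩
    have hget := congrArg (fun l : List ℕ => l.getD (2*j+1) 0) hSS
    have hlt : 2*j+1 < Lf v p S := by unfold Lf; split_ifs <;> omega
    have hlt' : 2*j+1 < Lf v p S' := by unfold Lf; split_ifs <;> omega
    rw [Phi_getD _ _ _ _ hlt, Phi_getD _ _ _ _ hlt', ff_odd, ff_odd] at hget
    by_cases m1 : (j+1) ∈ S <;> by_cases m2 : (j+1) ∈ S' <;>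
      [skip; skip; skip; skip]
    · simp [m1, m2]
    · exfalso; rw [fA, fA, if_pos m1, if_neg m2] at hget; split_ifs at hget <;> omega
    · exfalso; rw [fA, fA, if_neg m1, if_pos m2] at hget; split_ifs at hget <;> omega
    · simp [m1, m2]
  · constructor
    · intro h; exact absurd (Finset.mem_Icc.1 (hS h)) (by omega)
    · intro h; exact absurd (Finset.mem_Icc.1 (hS' h)) (by omega)

theorem mem_norm (p : ℕ) (hv : ∀ i ≤ p, v (i+1) + 2 ≤ v i) :
    ∀ (m : ℕ) (S : Finset ℕ), S.card ≤ m → S ⊆ Finset.Icc 1 p →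
      NormMem (Phi v p ∅) (Phi v p S) := by
  intro m
  induction m with
  | zero =>
    intro S hc _
    have : S = ∅ := Finset.card_eq_zero.1 (by omega)
    subst this; exact NormMem.base
  | succ m ih =>
    intro S hc hS
    rcases S.eq_empty_or_nonempty with rfl | hne
    · exact NormMem.base
    · obtain ⟨x, hx⟩ := hne
      have hx1 := Finset.mem_Icc.1 (hS hx)
      obtain ⟨j, rfl⟩ : ∃ j, x = j+1 := ⟨x-1, by omega⟩
      have hS0 : S.erase (j+1) ⊆ Finset.Icc 1 p := (Finset.erase_subset _ _).trans hS
      have hins : insert (j+1) (S.erase (j+1)) = S := Finset.insert_erase hx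
      have hstep := step_eq v (S.erase (j+1)) j p hv hS0 (by omega)
        (Finset.notMem_erase _ _)
      have hmem := ih (S.erase (j+1))
        (by have := Finset.card_erase_of_mem hx; omega) hS0
      have hres := NormMem.step _ j hmem hstep.1 hstep.2.1
      rw [hstep.2.2, hins] at hres
      exact hres

theorem norm_sub (p : ℕ) (hv : ∀ i ≤ p, v (i+1) + 2 ≤ v i) (Q : List ℕ)
    (h : NormMem (Phi v p ∅) Q) : ∃ S, S ⊆ Finset.Icc 1 p ∧ Q = Phi v p S := by
  induction h with
  | base => exact ⟨∅, by simp, rfl⟩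
  | step c i hc hlen heq ih =>
    obtain ⟨S, hS, rfl⟩ := ih
    obtain ⟨hip, hiS⟩ := step_inv v S i p hv hS hlen heq
    exact ⟨insert (i+1) S,
      Finset.insert_subset (Finset.mem_Icc.2 (by omega)) hS,
      (step_eq v S i p hv hS hip hiS).2.2⟩

theorem norm_char (p : ℕ) (hv : ∀ i ≤ p, v (i+1) + 2 ≤ v i) (Q : List ℕ) :
    NormMem (Phi v p ∅) Q ↔ ∃ S, S ⊆ Finset.Icc 1 p ∧ Q = Phi v p S := by
  constructor
  · exact norm_sub v p hv Q
  · rintro ⟨S, hS, rfl⟩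
    exact mem_norm v p hv S.card S le_rfl hS

lemma chains_ne_nil (a b : ℕ) (l : List ℕ) : chains (a :: b :: l) ≠ [] := by
  unfold chains
  cases chains l with
  | nil => simp
  | cons C L => dsimp only; split_ifs <;> simp

lemma chains_single_cons {x y : ℕ} {r : List ℕ} (hr : r ≠ [])
    (h : chains (x :: y :: r) = [x :: y :: r]) : y ≤ r.headI ∧ chains r = [r] := by
  cases r with
  | nil => exact absurd rfl hr
  | cons c r' =>
    cases r' with
    | nil =>
      exfalso
      simp [chains] at h
    | cons d r'' =>
      obtain ⟨C, L, hCL⟩ : ∃ C L, chains (c :: d :: r'') = C :: L := by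
        cases hE : chains (c :: d :: r'') with
        | nil => exact absurd hE (chains_ne_nil c d r'')
        | cons C L => exact ⟨C, L, rfl⟩
      rw [chains, hCL] at h
      dsimp only at h
      split_ifs at h with hlt
      · simp at h
      · simp only [List.cons.injEq] at h
        obtain ⟨⟨_, _, hC⟩, hL⟩ := h
        subst hC; subst hL
        exact ⟨not_lt.1 hlt, hCL⟩

lemma pairs_le : ∀ (n : ℕ) (l : List ℕ), l.length ≤ n → chains l = [l] →
    ∀ q, 2*q+2 < l.length → l.getD (2*q+1) 0 ≤ l.getD (2*q+2) 0 := by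
  intro n
  induction n with
  | zero => intro l hl _ q hq; omega
  | succ n ih =>
    intro l hl hc q hq
    match l, hq with
    | x :: y :: r, hq =>
      have hr : r ≠ [] := by
        intro h; subst h; simp at hq
      obtain ⟨hhead, hcr⟩ := chains_single_cons hr hc
      cases q with
      | zero =>
        cases r with
        | nil => exact absurd rfl hr
        | cons c r' => simpa using hhead
      | succ q =>
        have := ih r (by simp at hl; omega) hcr q (by simp at hq ⊢; omega)
        simpa [show 2*(q+1)+1 = (2*q+1)+2 by omega, show 2*(q+1)+2 = (2*q+2)+2 by omega]
          using this

lemma chain_getD_le (l : List ℕ) (h : l.Chain' (· ≥ ·)) (k : ℕ) (hk : k+1 < l.length) :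
    l.getD (k+1) 0 ≤ l.getD k 0 := by
  rw [List.getD_eq_getElem _ _ hk, List.getD_eq_getElem _ _ (by omega)]
  exact List.isChain_iff_getElem.1 h k (by omega)

end CPf

open CPf in
/-- for a generic single chain `O = (c_0, c_1) ++ rest` with at
least one interior pair, `Norm(O)` is the disjoint union of the sequences
`P^u = (c_0, c_1) ++ P` and `P^d = ` (fundamental degeneration of the first
four entries of `P^u`) over `P ∈ Norm(rest)`; consequently
`|Norm(O)| = 2 |Norm(rest)| = 2^p` where `p` is the number of interior
pairs of the chain `O`. -/
theorem norm_single_chain_recursion (a b : ℕ) (rest : List ℕ)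
    (hrest : 2 ≤ rest.length) (hO : TypeC (a :: b :: rest))
    (hchain : chains (a :: b :: rest) = [a :: b :: rest])
    (hgen : GenericChain (a :: b :: rest)) :
    (∀ P, NormMem rest P →
        NormMem (a :: b :: rest) (a :: b :: P) ∧
        NormMem (a :: b :: rest) (degenAt (a :: b :: P) 0)) ∧
    (∀ P P', NormMem rest P → NormMem rest P' →
        (a :: b :: P = a :: b :: P' → P = P') ∧
        (degenAt (a :: b :: P) 0 = degenAt (a :: b :: P') 0 → P = P') ∧
        a :: b :: P ≠ degenAt (a :: b :: P') 0) ∧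
    {Q : List ℕ | NormMem (a :: b :: rest) Q} =
      {Q : List ℕ | ∃ P, NormMem rest P ∧
        (Q = a :: b :: P ∨ Q = degenAt (a :: b :: P) 0)} ∧
    {Q : List ℕ | NormMem (a :: b :: rest) Q}.ncard =
      2 * {P : List ℕ | NormMem rest P}.ncard ∧
    {Q : List ℕ | NormMem (a :: b :: rest) Q}.ncard = 2 ^ (rest.length / 2) := by
  set O := a :: b :: rest with hOdef
  set p := rest.length / 2 with hpdef
  have hOlen : O.length = rest.length + 2 := by simp [hOdef]
  have hrl : rest.length = 2 * p := by
    obtain ⟨t, ht⟩ := hO.1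
    rw [hOlen] at ht; omega
  have hp : 1 ≤ p := by omega
  -- pair equalities
  have hpairs : ∀ q, 2*q+2 < O.length → O.getD (2*q+1) 0 = O.getD (2*q+2) 0 := by
    intro q hq
    have h1 := pairs_le O.length O le_rfl hchain q hq
    have h2 := chain_getD_le O hO.2.1 (2*q+1) (by omega)
    rw [show 2*q+1+1 = 2*q+2 by omega] at h2
    omega
  -- strictness
  have hstrict : ∀ q, 2*q+1 < O.length → O.getD (2*q+1) 0 < O.getD (2*q) 0 := by
    intro q hq
    rcases hgen with ⟨h2, _⟩ | ⟨_, hs⟩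
    · rw [hOlen] at h2; omega
    · exact hs q hq
  have hparity := hO.2.2
  set v : ℕ → ℕ := fun i => O.getD (min (2*i) (2*p+1)) 0 with hvdef
  have hvA : ∀ i, i ≤ p → v i = O.getD (2*i) 0 := by
    intro i hi
    simp only [hvdef]
    rw [min_eq_left (by omega)]
  have hvB : v (p+1) = O.getD (2*p+1) 0 := by
    simp only [hvdef]
    rw [min_eq_right (by omega)]
  have hv : ∀ i ≤ p, v (i+1) + 2 ≤ v i := by
    intro i hi
    obtain ⟨t, ht⟩ := hparity i (by omega)
    rcases Nat.lt_or_ge i p with hip | hip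
    · rw [hvA i hi, hvA (i+1) (by omega), show 2*(i+1) = 2*i+2 by omega]
      have he := hpairs i (by omega)
      have hs := hstrict i (by omega)
      omega
    · have hip' : i = p := by omega
      subst hip'
      rw [hvA p le_rfl, hvB]
      have hs := hstrict p (by omega)
      omega
  have hOeq : O = Phi v p ∅ := by
    have hLf : Lf v p (∅ : Finset ℕ) = 2*p+2 := by simp [Lf, Sh]
    rw [show Phi v p ∅ = (List.range (2*p+2)).map (ff v ∅) by unfold Phi; rw [hLf]]
    apply eq_rangeMap _ _ _ (by omega)
    intro k hk
    rcases Nat.even_or_odd k with ⟨i, hi⟩ | ⟨i, hi⟩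
    · have hk2 : k = 2*i := by omega
      subst hk2
      rw [ff_even]
      simp only [fB, Finset.notMem_empty, if_false]
      exact (hvA i (by omega)).symm
    · have hk2 : k = 2*i+1 := by omega
      subst hk2
      rw [ff_odd]
      simp only [fA, Finset.notMem_empty, if_false]
      rcases Nat.lt_or_ge i p with hip | hip
      · rw [hvA (i+1) (by omega), show 2*(i+1) = 2*i+2 by omega]
        exact hpairs i (by omega)
      · have : i = p := by omega
        subst this
        rw [hvB]
  set v' : ℕ → ℕ := fun i => v (i+1) with hv'def
  have hv' : ∀ i ≤ p-1, v' (i+1) + 2 ≤ v' i := by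
    intro i hi
    simp only [hv'def]
    exact hv (i+1) (by omega)
  have hshift : ∀ k, O.getD (k+2) 0 = rest.getD k 0 := by
    intro k
    simp [hOdef]
  have hrest_eq : rest = Phi v' (p-1) ∅ := by
    have hLf : Lf v' (p-1) (∅ : Finset ℕ) = 2*(p-1)+2 := by simp [Lf, Sh]
    rw [show Phi v' (p-1) ∅ = (List.range (2*(p-1)+2)).map (ff v' ∅) by
      unfold Phi; rw [hLf]]
    apply eq_rangeMap _ _ _ (by omega)
    intro k hk
    rcases Nat.even_or_odd k with ⟨i, hi⟩ | ⟨i, hi⟩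
    · have hk2 : k = 2*i := by omega
      subst hk2
      rw [ff_even]
      simp only [fB, Finset.notMem_empty, if_false, hv'def]
      rw [hvA (i+1) (by omega), ← hshift, show 2*(i+1) = 2*i+2 by omega]
    · have hk2 : k = 2*i+1 := by omega
      subst hk2
      rw [ff_odd]
      simp only [fA, Finset.notMem_empty, if_false, hv'def]
      rw [← hshift, show 2*i+1+2 = 2*i+3 by omega]
      rcases Nat.lt_or_ge (i+2) (p+1) with hip | hip
      · rw [hvA (i+2) (by omega), show 2*(i+2) = 2*i+3+1 by omega]
        have hpp := hpairs (i+1) (by omega)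
        rw [show 2*(i+1)+1 = 2*i+3 by omega, show 2*(i+1)+2 = 2*i+3+1 by omega] at hpp
        exact hpp
      · have : i + 1 = p := by omega
        rw [show i+1+1 = p+1 by omega, hvB, show 2*p+1 = 2*i+3 by omega]
  -- the shift of subsets
  have hmemT : ∀ (S' : Finset ℕ) (i : ℕ), i+1 ∈ S'.image (·+1) ↔ i ∈ S' := by
    intro S' i
    simp [Finset.mem_image]
  have hT1 : ∀ S' : Finset ℕ, S' ⊆ Finset.Icc 1 (p-1) → (1 : ℕ) ∉ S'.image (·+1) := by
    intro S' hS' h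
    obtain ⟨x, hx, hxe⟩ := Finset.mem_image.1 h
    have := Finset.mem_Icc.1 (hS' hx)
    omega
  have hTsub : ∀ S' : Finset ℕ, S' ⊆ Finset.Icc 1 (p-1) →
      S'.image (·+1) ⊆ Finset.Icc 1 p := by
    intro S' hS' x hx
    obtain ⟨y, hy, hye⟩ := Finset.mem_image.1 hx
    have := Finset.mem_Icc.1 (hS' hy)
    exact Finset.mem_Icc.2 (by omega)
  have hshiftPhi : ∀ S' : Finset ℕ, S' ⊆ Finset.Icc 1 (p-1) →
      a :: b :: Phi v' (p-1) S' = Phi v p (S'.image (·+1)) := by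
    intro S' hS'
    set T := S'.image (·+1) with hTdef
    have hmemT2 : ∀ i : ℕ, i+1 ∈ T ↔ i ∈ S' := hmemT S'
    have hSh : Sh v' (p-1) S' ↔ Sh v p T := by
      have e1 : (p - 1 ∈ S') ↔ (p ∈ T) := by
        rw [← hmemT S' (p-1), show p-1+1 = p by omega]
      have e2 : v' (p-1) = v p := by
        simp only [hv'def]; rw [show p-1+1 = p by omega]
      have e3 : v' (p-1+1) = v (p+1) := by
        simp only [hv'def]; rw [show p-1+1+1 = p+1 by omega]
      unfold Sh
      rw [e2, e3, e1]
    have hLf : Lf v p T = Lf v' (p-1) S' + 2 := by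
      unfold Lf
      rcases Classical.em (Sh v' (p-1) S') with h | h
      · rw [if_pos (hSh.1 h), if_pos h]; omega
      · rw [if_neg (fun hh => h (hSh.2 hh)), if_neg h]; omega
    rw [show Phi v p T = (List.range (Lf v p T)).map (ff v T) from rfl]
    apply eq_rangeMap
    · simp [Phi_length, hLf]
    · intro k hk
      match k with
      | 0 =>
        have h0T : (0:ℕ) ∉ T := fun h => by
          have := Finset.mem_Icc.1 (hTsub S' hS' h); omega
        simp only [List.getD_cons_zero]
        simp [ff, fB, h0T, hvdef, hOdef]
      | 1 =>
        have h1T : (1:ℕ) ∉ T := hT1 S' hS'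
        have hpp := hpairs 0 (by omega)
        norm_num at hpp
        simp only [List.getD_cons_succ, List.getD_cons_zero]
        simp only [ff, fA, h1T, hvdef]
        norm_num
        rw [min_eq_left (by omega), ← hpp]
        simp [hOdef]
      | (m+2) =>
        simp only [List.getD_cons_succ]
        have hLf' : (Phi v' (p-1) S').length = Lf v' (p-1) S' := Phi_length _ _ _
        rw [Phi_getD _ _ _ _ (by omega)]
        rcases Nat.even_or_odd m with ⟨i, hi⟩ | ⟨i, hi⟩
        · rw [show m = 2*i by omega, show 2*i+2 = 2*(i+1) by omega, ff_even, ff_even]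
          simp only [fB]
          simp only [hmemT2, hv'def]
        · rw [show m = 2*i+1 by omega, show 2*i+1+2 = 2*(i+1)+1 by omega, ff_odd, ff_odd]
          simp only [fA]
          simp only [show i+1+1-1 = i+1 by omega, show i+1-1 = i by omega,
            hmemT2, hv'def]
  have hdown : ∀ S' : Finset ℕ, S' ⊆ Finset.Icc 1 (p-1) →
      degenAt (a :: b :: Phi v' (p-1) S') 0 = Phi v p (insert 1 (S'.image (·+1))) := by
    intro S' hS'
    rw [hshiftPhi S' hS']
    have := (step_eq v (S'.image (·+1)) 0 p hv (hTsub S' hS') (by omega)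
      (by simpa using hT1 S' hS')).2.2
    simpa using this
  have hrep : ∀ P, NormMem rest P →
      ∃ S', S' ⊆ Finset.Icc 1 (p-1) ∧ P = Phi v' (p-1) S' := by
    intro P hP
    rw [hrest_eq] at hP
    exact norm_sub v' (p-1) hv' P hP
  have hrepmem : ∀ S' : Finset ℕ, S' ⊆ Finset.Icc 1 (p-1) →
      NormMem rest (Phi v' (p-1) S') := by
    intro S' h
    rw [hrest_eq]
    exact mem_norm v' (p-1) hv' _ S' le_rfl h
  have hG1 : ∀ P, NormMem rest P → NormMem O (a::b::P) ∧
      NormMem O (degenAt (a::b::P) 0) := by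
    intro P hP
    obtain ⟨S', hS', rfl⟩ := hrep P hP
    constructor
    · rw [hshiftPhi S' hS', hOeq]
      exact mem_norm v p hv _ _ le_rfl (hTsub S' hS')
    · rw [hdown S' hS', hOeq]
      exact mem_norm v p hv _ _ le_rfl
        (Finset.insert_subset (Finset.mem_Icc.2 ⟨le_rfl, hp⟩) (hTsub S' hS'))
  have hG3 : {Q : List ℕ | NormMem O Q} =
      {Q : List ℕ | ∃ P, NormMem rest P ∧ (Q = a::b::P ∨ Q = degenAt (a::b::P) 0)} := by
    ext Q
    simp only [Set.mem_setOf_eq]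
    constructor
    · intro hQ
      rw [hOeq] at hQ
      obtain ⟨S, hS, rfl⟩ := norm_sub v p hv Q hQ
      have hS''sub : (S.erase 1).image (· - 1) ⊆ Finset.Icc 1 (p-1) := by
        intro x hx
        obtain ⟨y, hy, rfl⟩ := Finset.mem_image.1 hx
        have hy1 := Finset.mem_Icc.1 (hS (Finset.mem_of_mem_erase hy))
        have hyne := Finset.ne_of_mem_erase hy
        exact Finset.mem_Icc.2 (by omega)
      have himg : ((S.erase 1).image (· - 1)).image (·+1) = S.erase 1 := by
        ext z
        constructor
        · intro hz
          obtain ⟨x, hx, rfl⟩ := Finset.mem_image.1 hz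
          obtain ⟨y, hy, rfl⟩ := Finset.mem_image.1 hx
          have hy1 := Finset.mem_Icc.1 (hS (Finset.mem_of_mem_erase hy))
          have hyne := Finset.ne_of_mem_erase hy
          rw [show y - 1 + 1 = y by omega]
          exact hy
        · intro hz
          have hz1 := Finset.mem_Icc.1 (hS (Finset.mem_of_mem_erase hz))
          have hzne := Finset.ne_of_mem_erase hz
          exact Finset.mem_image.2 ⟨z - 1, Finset.mem_image.2 ⟨z, hz, rfl⟩, by omega⟩
      refine ⟨Phi v' (p-1) ((S.erase 1).image (· - 1)), hrepmem _ hS''sub, ?_⟩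
      by_cases h1 : 1 ∈ S
      · right
        rw [hdown _ hS''sub, himg, Finset.insert_erase h1]
      · left
        rw [hshiftPhi _ hS''sub, himg, Finset.erase_eq_of_notMem h1]
    · rintro ⟨P, hP, rfl | rfl⟩
      · exact (hG1 P hP).1
      · exact (hG1 P hP).2
  have hcard : ∀ (w : ℕ → ℕ) (pp : ℕ), (∀ i ≤ pp, w (i+1) + 2 ≤ w i) →
      {Q : List ℕ | NormMem (Phi w pp ∅) Q}.ncard = 2 ^ pp := by
    intro w pp hw
    have hset : {Q : List ℕ | NormMem (Phi w pp ∅) Q} =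
        ↑(((Finset.Icc 1 pp).powerset).image (Phi w pp)) := by
      ext Q
      simp only [Set.mem_setOf_eq, Finset.coe_image, Set.mem_image, Finset.mem_coe,
        Finset.mem_powerset]
      rw [norm_char w pp hw Q]
      constructor
      · rintro ⟨S, hS, rfl⟩; exact ⟨S, hS, rfl⟩
      · rintro ⟨S, hS, rfl⟩; exact ⟨S, hS, rfl⟩
    rw [hset, Set.ncard_coe_finset, Finset.card_image_of_injOn
      (fun X hX Y hY hXY => Phi_inj w X pp hw (Finset.mem_powerset.1 hX)
        (Finset.mem_powerset.1 hY) hXY),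
      Finset.card_powerset, Nat.card_Icc]
    simp
  have hcardO : {Q : List ℕ | NormMem O Q}.ncard = 2^p := by
    rw [hOeq]; exact hcard v p hv
  have hcardR : {P : List ℕ | NormMem rest P}.ncard = 2^(p-1) := by
    rw [hrest_eq]; exact hcard v' (p-1) hv'
  have hpow : 2^p = 2^(p-1) * 2 := by
    have := pow_succ 2 (p-1)
    rw [show p-1+1 = p by omega] at this
    exact this
  refine ⟨hG1, ?_, hG3, by rw [hcardO, hcardR, hpow]; ring, by rw [hcardO]⟩
  intro P P' hP hP'
  obtain ⟨S1, hS1, rfl⟩ := hrep P hP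
  obtain ⟨S2, hS2, rfl⟩ := hrep P' hP'
  have hsub1 : S1.image (·+1) ⊆ Finset.Icc 1 p := hTsub S1 hS1
  have hsub2 : S2.image (·+1) ⊆ Finset.Icc 1 p := hTsub S2 hS2
  have hins1 : insert 1 (S1.image (·+1)) ⊆ Finset.Icc 1 p :=
    Finset.insert_subset (Finset.mem_Icc.2 ⟨le_rfl, hp⟩) hsub1
  have hins2 : insert 1 (S2.image (·+1)) ⊆ Finset.Icc 1 p :=
    Finset.insert_subset (Finset.mem_Icc.2 ⟨le_rfl, hp⟩) hsub2
  refine ⟨fun h => by simpa using h, fun h => ?_, fun h => ?_⟩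
  · rw [hdown S1 hS1, hdown S2 hS2] at h
    have hTT := Phi_inj v _ p hv hins1 hins2 h
    have hT12 : S1.image (·+1) = S2.image (·+1) := by
      rw [← Finset.erase_insert (hT1 S1 hS1), ← Finset.erase_insert (hT1 S2 hS2), hTT]
    have := (hshiftPhi S1 hS1).trans (by rw [hT12, ← hshiftPhi S2 hS2])
    simpa using this
  · rw [hshiftPhi S1 hS1, hdown S2 hS2] at h
    have hTT := Phi_inj v _ p hv hsub1 hins2 h
    exact hT1 S1 hS1 (hTT ▸ Finset.mem_insert_self 1 _)
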